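/- Optimal path-delay on symmetric trees (combinatorial content of the delay-minimizing deadline τ*): let D ≥ 1 and let N_1, …, N_D be positive integers. Over all families of schedules {σ_v : ℕ → Option (Fin N_{d+1})}, one for each level-d node v with 0 ≤ d < D, in which every child of every node has a finite maximum inter-scheduling time k_{e}, the minimum over families of the maximum over root-to-leaf paths (c_1, …, c_D) of Σ_{d=1}^{D} k_{e(c_1,…,c_d)} equals Σ_{d=1}^{D} N_d. The minimum is attained by the universal round-robin (URR) family σ_v(t) = some (t mod N_{d+1}) for every level-d node v, under which every level-d link has maximum inter-scheduling time exactly N_d. -/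
import Mathlib


lemma exists_slow_child (n : ℕ) (hn : 0 < n) (sched : ℕ → Option (Fin n))
    (hfin : ∀ c : Fin n, ∃ K, ∀ t, ∃ u, t ≤ u ∧ u < t + K ∧ sched u = some c) :
    ∃ c : Fin n, n ≤ sInf {K | ∀ t, ∃ u, t ≤ u ∧ u < t + K ∧ sched u = some c} := by
  by_contra h
  push_neg at h
  have hmem : ∀ c : Fin n,
      sInf {K | ∀ t, ∃ u, t ≤ u ∧ u < t + K ∧ sched u = some c}
        ∈ {K | ∀ t, ∃ u, t ≤ u ∧ u < t + K ∧ sched u = some c} := by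
    intro c
    exact Nat.sInf_mem ⟨(hfin c).choose, (hfin c).choose_spec⟩
  choose u hu1 hu2 hu3 using fun c => hmem c 0
  have hb : ∀ c, u c < n - 1 := by
    intro c
    have := hu2 c
    have := h c
    omega
  have hinj : Function.Injective (fun c => (⟨u c, hb c⟩ : Fin (n - 1))) := by
    intro a b hab
    have huv : u a = u b := congrArg Fin.val hab
    have h2 : some a = some b := by rw [← hu3 a, huv, hu3 b]
    exact Option.some_injective _ h2
  have := Fintype.card_le_of_injective _ hinj
  simp [Fintype.card_fin] at this
  omega

def pathAux (N : ℕ → ℕ) {D : ℕ} (hN : ∀ d, 0 < N d)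
    (pick : ∀ d : Fin D, ((j : Fin d.val) → Fin (N j.val)) → Fin (N d.val)) :
    ∀ n : ℕ, (j : Fin n) → Fin (N j.val)
  | 0 => fun j => j.elim0
  | (n+1) => Fin.snoc (pathAux N hN pick n)
      (if h : n < D then pick ⟨n, h⟩ (pathAux N hN pick n) else ⟨0, hN n⟩)

lemma pathAux_coh (N : ℕ → ℕ) {D : ℕ} (hN : ∀ d, 0 < N d)
    (pick : ∀ d : Fin D, ((j : Fin d.val) → Fin (N j.val)) → Fin (N d.val)) :
    ∀ n m (h : m ≤ n) (j : Fin m),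
      pathAux N hN pick n ⟨j.val, lt_of_lt_of_le j.isLt h⟩ = pathAux N hN pick m j := by
  intro n
  induction n with
  | zero =>
    intro m h j
    have hm : m = 0 := by omega
    subst hm
    exact j.elim0
  | succ n ih =>
    intro m h j
    rcases Nat.eq_or_lt_of_le h with h' | h'
    · subst h'; congr 1
    · have hm : m ≤ n := by omega
      have hj : j.val < n := lt_of_lt_of_le j.isLt hm
      rw [pathAux]
      exact (Fin.snoc_castSucc (α := fun i : Fin (n+1) => Fin (N i.val))
        (p := pathAux N hN pick n) (i := ⟨j.val, hj⟩) _).trans (ih m hm j)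

lemma pathAux_last (N : ℕ → ℕ) {D : ℕ} (hN : ∀ d, 0 < N d)
    (pick : ∀ d : Fin D, ((j : Fin d.val) → Fin (N j.val)) → Fin (N d.val))
    (n : ℕ) (h : n < D) :
    pathAux N hN pick (n+1) ⟨n, Nat.lt_succ_self n⟩ = pick ⟨n, h⟩ (pathAux N hN pick n) := by
  rw [pathAux]
  exact (Fin.snoc_last _ _).trans (dif_pos h)

lemma urr_k (n : ℕ) (hn : 0 < n) (c : Fin n) :
    sInf {K : ℕ | ∀ t : ℕ, ∃ u, t ≤ u ∧ u < t + K ∧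
      (some (⟨u % n, Nat.mod_lt u hn⟩ : Fin n) : Option (Fin n)) = some c} = n := by
  have hmemn : n ∈ {K : ℕ | ∀ t : ℕ, ∃ u, t ≤ u ∧ u < t + K ∧
      (some (⟨u % n, Nat.mod_lt u hn⟩ : Fin n) : Option (Fin n)) = some c} := by
    intro t
    have ht := Nat.div_add_mod t n
    have hr := Nat.mod_lt t hn
    by_cases hrc : t % n ≤ c.val
    · refine ⟨n * (t / n) + c.val, by omega, by omega, ?_⟩
      congr 1
      ext
      simp [Nat.mul_add_mod, Nat.mod_eq_of_lt c.isLt]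
    · refine ⟨n * (t / n) + n + c.val, by omega, by omega, ?_⟩
      congr 1
      ext
      have : n * (t / n) + n + c.val = n * (t / n + 1) + c.val := by ring
      simp [this, Nat.mul_add_mod, Nat.mod_eq_of_lt c.isLt]
  refine le_antisymm (Nat.sInf_le hmemn) (le_csInf ⟨n, hmemn⟩ ?_)
  intro K hK
  obtain ⟨u, hu1, hu2, hu3⟩ := hK (c.val + 1)
  have hmod : u % n = c.val := congrArg Fin.val (Option.some_injective _ hu3)
  have hd := Nat.div_add_mod u n
  have hq : 0 < u / n := by
    rcases Nat.eq_zero_or_pos (u / n) with h | h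
    · rw [h, Nat.mul_zero] at hd; omega
    · exact h
  have : n ≤ n * (u / n) := Nat.le_mul_of_pos_right n hq
  omega



/-- Optimal path-delay on symmetric trees: with the symmetric tree of
depth `D ≥ 1` and positive branching numbers `N 0, …, N (D-1)` (0-indexed), consider
families of schedules `σ d v : ℕ → Option (Fin (N d))`, one for each level-`d` node
`v : (j : Fin d) → Fin (N j)`.  The maximum inter-scheduling time of a child `c` in a
schedule is the least `K` such that `c` occurs in every window of `K` consecutive
slots.  Then: (a) for every family in which every child of every node has a finite
maximum inter-scheduling time, there is a root-to-leaf path whose sum of maximum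
inter-scheduling times is at least `Σ_d N d`; and (b) under the universal round-robin
family `σ d v t = some (t mod N d)`, every level-`d` link has maximum inter-scheduling
time exactly `N d` (so the minimum over families of the maximum path-sum equals
`Σ_d N d`, attained by URR). -/
theorem optimal_path_delay_symmetric_tree
    (D : ℕ) (hD : 1 ≤ D) (N : ℕ → ℕ) (hN : ∀ d, 0 < N d) :
    (∀ σ : ∀ d : Fin D, ((j : Fin d.val) → Fin (N j.val)) → ℕ → Option (Fin (N d.val)),
      (∀ (d : Fin D) (v : (j : Fin d.val) → Fin (N j.val)) (c : Fin (N d.val)),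
        ∃ K : ℕ, ∀ t : ℕ, ∃ u, t ≤ u ∧ u < t + K ∧ σ d v u = some c) →
      ∃ c : (d : Fin D) → Fin (N d.val),
        (∑ d : Fin D, N d.val) ≤
          ∑ d : Fin D,
            sInf {K : ℕ | ∀ t : ℕ, ∃ u, t ≤ u ∧ u < t + K ∧
              σ d (fun j => c ⟨j.val, j.isLt.trans d.isLt⟩) u = some (c d)}) ∧
    (∀ (d : Fin D) (c : Fin (N d.val)),
      sInf {K : ℕ | ∀ t : ℕ, ∃ u, t ≤ u ∧ u < t + K ∧
        (some (⟨u % N d.val, Nat.mod_lt u (hN d.val)⟩ : Fin (N d.val))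
          : Option (Fin (N d.val))) = some c} = N d.val) := by
  constructor
  · intro σ hfin
    have hpick : ∀ (d : Fin D) (v : (j : Fin d.val) → Fin (N j.val)),
        ∃ c : Fin (N d.val),
          N d.val ≤ sInf {K | ∀ t, ∃ u, t ≤ u ∧ u < t + K ∧ σ d v u = some c} :=
      fun d v => exists_slow_child (N d.val) (hN d.val) (σ d v) (hfin d v)
    choose pick pickspec using hpick
    refine ⟨pathAux N hN pick D, ?_⟩
    apply Finset.sum_le_sum
    intro d _
    have h1 : (fun j : Fin d.val =>
        pathAux N hN pick D ⟨j.val, j.isLt.trans d.isLt⟩) = pathAux N hN pick d.val :=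
      funext fun j => pathAux_coh N hN pick D d.val (le_of_lt d.isLt) j
    have h2 : pathAux N hN pick D d = pick d (pathAux N hN pick d.val) := by
      have hc : pathAux N hN pick D ⟨d.val, d.isLt⟩
          = pathAux N hN pick (d.val + 1) ⟨d.val, Nat.lt_succ_self _⟩ :=
        pathAux_coh N hN pick D (d.val + 1) d.isLt ⟨d.val, Nat.lt_succ_self _⟩
      calc pathAux N hN pick D d = pathAux N hN pick D ⟨d.val, d.isLt⟩ := by congr 1
        _ = pathAux N hN pick (d.val + 1) ⟨d.val, Nat.lt_succ_self _⟩ := hc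
        _ = pick ⟨d.val, d.isLt⟩ (pathAux N hN pick d.val) :=
            pathAux_last N hN pick d.val d.isLt
        _ = pick d (pathAux N hN pick d.val) := by congr 1
    rw [h1, h2]
    exact pickspec d (pathAux N hN pick d.val)
  · intro d c
    exact urr_k (N d.val) (hN d.val) c
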